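/- arXiv:1510.06219 — 5 statements merged into one kernel-verified Lean document; each statement's English description precedes it below -/
import Mathlib

section
/- Let n ∈ ℕ, let μ be a probability measure on ℝⁿ, let A be a real n×n matrix, and for each t ≥ 0 let κ_t be a Markov kernel from ℝⁿ to ℝⁿ. Assume: (i) reversibility: for every t ≥ 0 and every bounded measurable f : ℝⁿ × ℝⁿ → ℝ, ∫∫ f(x,y) κ_t(x)(dy) μ(dx) = ∫∫ f(y,x) κ_t(x)(dy) μ(dx); (ii) for every t ≥ 0 and μ-a.e. x, each coordinate function y ↦ y_j is integrable with respect to κ_t(x) and ∫ y κ_t(x)(dy) = exp(-tA) x; (iii) the functions x ↦ x_i x_j are μ-integrable with G_{ij} := ∫ x_i x_j μ(dx), and the functions (x,y) ↦ x_i y_j are integrable with respect to the measure μ(dx)κ_t(x)(dy) for each t ≥ 0. Then for every t ≥ 0 the matrix exp(-tA)·G is symmetric, and consequently A·G = G·Aᵀ, i.e. the matrix M := A·G is symmetric. -/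
open MeasureTheory ProbabilityTheory Matrix Filter

private lemma onsager_clamp_abs_le (N c : ℝ) (hN : 0 ≤ N) :
    |max (-N) (min N c)| ≤ |c| := by
  rw [abs_le]
  constructor
  · exact le_max_of_le_right (le_min ((neg_nonpos.2 (abs_nonneg c)).trans hN) (neg_abs_le c))
  · exact max_le (le_trans (neg_nonpos.2 hN) (abs_nonneg c))
      ((min_le_right N c).trans (le_abs_self c))

private lemma onsager_clamp_eq (N c : ℝ) (h : |c| ≤ N) :
    max (-N) (min N c) = c := by
  rw [min_eq_right (abs_le.1 h).2, max_eq_right (abs_le.1 h).1]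

/-- Differentiating the symmetry of `exp(-tA) G` at `t = 0⁺` gives `A G = G Aᵀ`. -/
private lemma onsager_deriv_step (n : ℕ) (A G : Matrix (Fin n) (Fin n) ℝ)
    (hGs : G.IsSymm)
    (h : ∀ t : ℝ, 0 ≤ t → (NormedSpace.exp (-(t • A)) * G).IsSymm) :
    A * G = G * Aᵀ := by
  letI : SeminormedRing (Matrix (Fin n) (Fin n) ℝ) := Matrix.linftyOpSemiNormedRing
  letI : NormedRing (Matrix (Fin n) (Fin n) ℝ) := Matrix.linftyOpNormedRing
  letI : NormedAlgebra ℝ (Matrix (Fin n) (Fin n) ℝ) := Matrix.linftyOpNormedAlgebra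
  have h1 : HasDerivAt (fun t : ℝ => NormedSpace.exp (t • (-A)) * G) (-A * G) 0 := by
    have := (hasDerivAt_exp_smul_const (𝕂 := ℝ) (-A) (0 : ℝ)).mul_const G
    simp [zero_smul, NormedSpace.exp_zero] at this ⊢
    exact this
  have h2 : HasDerivAt (fun t : ℝ => Gᵀ * NormedSpace.exp (t • (-Aᵀ))) (Gᵀ * -Aᵀ) 0 := by
    have := (hasDerivAt_exp_smul_const (𝕂 := ℝ) (-Aᵀ) (0 : ℝ)).const_mul Gᵀ
    simp [zero_smul, NormedSpace.exp_zero] at this ⊢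
    exact this
  have key : ∀ t : ℝ, 0 ≤ t →
      NormedSpace.exp (t • (-A)) * G = Gᵀ * NormedSpace.exp (t • (-Aᵀ)) := by
    intro t ht
    have hs := h t ht
    rw [Matrix.IsSymm] at hs
    have ht1 : t • (-A) = -(t • A) := smul_neg t A
    have ht2 : t • (-Aᵀ) = (-(t • A))ᵀ := by
      rw [smul_neg, Matrix.transpose_neg, Matrix.transpose_smul]
    calc NormedSpace.exp (t • (-A)) * G = NormedSpace.exp (-(t • A)) * G := by rw [ht1]
      _ = (NormedSpace.exp (-(t • A)) * G)ᵀ := hs.symm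
      _ = Gᵀ * (NormedSpace.exp (-(t • A)))ᵀ := Matrix.transpose_mul _ _
      _ = Gᵀ * NormedSpace.exp ((-(t • A))ᵀ) := by rw [Matrix.exp_transpose]
      _ = Gᵀ * NormedSpace.exp (t • (-Aᵀ)) := by rw [ht2]
  have hu : -A * G = Gᵀ * -Aᵀ := by
    have hF := h1.hasDerivWithinAt (s := Set.Ici (0 : ℝ))
    have hH := h2.hasDerivWithinAt (s := Set.Ici (0 : ℝ))
    have hH' : HasDerivWithinAt (fun t : ℝ => NormedSpace.exp (t • (-A)) * G)
        (Gᵀ * -Aᵀ) (Set.Ici 0) 0 :=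
      hH.congr (fun y hy => key y hy) (key 0 le_rfl)
    exact (uniqueDiffOn_Ici (0 : ℝ) 0 Set.self_mem_Ici).eq_deriv _ hF hH'
  have : -(A * G) = -(Gᵀ * Aᵀ) := by rw [← neg_mul, ← mul_neg]; exact hu
  have hAG : A * G = Gᵀ * Aᵀ := neg_injective this
  rw [hAG, hGs]

/-- **Onsager reciprocity, symmetry part.** Microscopic reversibility of a Markov
process with invariant measure `μ` (covariance matrix `G`) whose conditional means
evolve linearly as `exp(-tA) x` implies that `exp(-tA) * G` is symmetric for all
`t ≥ 0`, and hence that the mobility `M = A * G` is symmetric: `A * G = G * Aᵀ`. -/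
theorem onsager_reciprocity_symmetry
    (n : ℕ) (μ : Measure (Fin n → ℝ)) [IsProbabilityMeasure μ]
    (A : Matrix (Fin n) (Fin n) ℝ)
    (κ : ℝ → Kernel (Fin n → ℝ) (Fin n → ℝ))
    (hκ : ∀ t, 0 ≤ t → IsMarkovKernel (κ t))
    -- (i) reversibility (detailed balance)
    (hrev : ∀ t, 0 ≤ t → ∀ f : (Fin n → ℝ) × (Fin n → ℝ) → ℝ,
      Measurable f → (∃ C : ℝ, ∀ p, |f p| ≤ C) →
      ∫ x, (∫ y, f (x, y) ∂(κ t x)) ∂μ = ∫ x, (∫ y, f (y, x) ∂(κ t x)) ∂μ)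
    -- (ii) linear evolution of conditional expectations
    (hmean : ∀ t, 0 ≤ t → ∀ᵐ x ∂μ,
      (∀ j, Integrable (fun y => y j) (κ t x)) ∧
      (∀ j, ∫ y, y j ∂(κ t x) = (NormedSpace.exp (-(t • A))).mulVec x j))
    -- (iii) integrability and the covariance matrix G
    (G : Matrix (Fin n) (Fin n) ℝ)
    (hGint : ∀ i j, Integrable (fun x => x i * x j) μ)
    (hG : ∀ i j, G i j = ∫ x, x i * x j ∂μ)
    (hcross : ∀ t, 0 ≤ t → ∀ i j,
      Integrable (fun p : (Fin n → ℝ) × (Fin n → ℝ) => p.1 i * p.2 j) (μ ⊗ₘ κ t)) :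
    (∀ t, 0 ≤ t → (NormedSpace.exp (-(t • A)) * G).IsSymm) ∧
      A * G = G * Aᵀ ∧ (A * G).IsSymm := by
  -- G is symmetric
  have hGs : G.IsSymm := by
    ext i j
    rw [Matrix.transpose_apply, hG, hG]
    simp_rw [mul_comm]
  -- Step 1: symmetry of the cross-correlation integral, via truncation + reversibility
  have hcross_symm : ∀ t, 0 ≤ t → ∀ i j,
      ∫ p : (Fin n → ℝ) × (Fin n → ℝ), p.1 i * p.2 j ∂(μ ⊗ₘ κ t)
        = ∫ p : (Fin n → ℝ) × (Fin n → ℝ), p.1 j * p.2 i ∂(μ ⊗ₘ κ t) := by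
    intro t ht i j
    haveI := hκ t ht
    set f : (Fin n → ℝ) × (Fin n → ℝ) → ℝ := fun p => p.1 i * p.2 j with hf_def
    have hfm : Measurable f :=
      ((measurable_pi_apply i).comp measurable_fst).mul
        ((measurable_pi_apply j).comp measurable_snd)
    -- truncations
    set F : ℕ → ((Fin n → ℝ) × (Fin n → ℝ)) → ℝ :=
      fun N p => max (-(N : ℝ)) (min (N : ℝ) (f p)) with hF_def
    have hFm : ∀ N : ℕ, Measurable (F N) := fun N =>
      measurable_const.max (measurable_const.min hfm)
    have hFb : ∀ N p, |F N p| ≤ (N : ℝ) := by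
      intro N p
      rw [abs_le]
      exact ⟨le_max_left _ _, max_le (neg_le_self (Nat.cast_nonneg N)) (min_le_left _ _)⟩
    have hFabs : ∀ N p, |F N p| ≤ |f p| := fun N p =>
      onsager_clamp_abs_le (N : ℝ) (f p) (Nat.cast_nonneg N)
    have hFtend : ∀ p, Tendsto (fun N : ℕ => F N p) atTop (nhds (f p)) := by
      intro p
      refine tendsto_const_nhds.congr' ?_
      filter_upwards [eventually_ge_atTop ⌈|f p|⌉₊] with N hN
      exact (onsager_clamp_eq (N : ℝ) (f p) ((Nat.le_ceil _).trans (Nat.cast_le.2 hN))).symm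
    -- integrability of truncations wrt the product measure
    have hFint : ∀ N, Integrable (F N) (μ ⊗ₘ κ t) := by
      intro N
      refine (integrable_const (N : ℝ)).mono' (hFm N).aestronglyMeasurable ?_
      exact Filter.Eventually.of_forall fun p => by
        simpa [Real.norm_eq_abs] using hFb N p
    have hGswapm : ∀ N, Measurable (fun p : (Fin n → ℝ) × (Fin n → ℝ) => F N (p.2, p.1)) :=
      fun N => (hFm N).comp (measurable_snd.prodMk measurable_fst)
    have hGswapint : ∀ N,
        Integrable (fun p : (Fin n → ℝ) × (Fin n → ℝ) => F N (p.2, p.1)) (μ ⊗ₘ κ t) := by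
      intro N
      refine (integrable_const (N : ℝ)).mono' (hGswapm N).aestronglyMeasurable ?_
      exact Filter.Eventually.of_forall fun p => by
        simpa [Real.norm_eq_abs] using hFb N (p.2, p.1)
    -- equality at each truncation level, from reversibility
    have hNeq : ∀ N : ℕ, ∫ p, F N p ∂(μ ⊗ₘ κ t) = ∫ p, F N (p.2, p.1) ∂(μ ⊗ₘ κ t) := by
      intro N
      rw [MeasureTheory.Measure.integral_compProd (hFint N),
        MeasureTheory.Measure.integral_compProd (hGswapint N)]
      exact hrev t ht (F N) (hFm N) ⟨(N : ℝ), hFb N⟩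
    -- pass to the limit on both sides
    have hswapint : Integrable (fun p : (Fin n → ℝ) × (Fin n → ℝ) => p.2 i * p.1 j)
        (μ ⊗ₘ κ t) := by
      have := hcross t ht j i
      simpa [mul_comm] using this
    have hT1 : Tendsto (fun N : ℕ => ∫ p, F N p ∂(μ ⊗ₘ κ t)) atTop
        (nhds (∫ p, f p ∂(μ ⊗ₘ κ t))) := by
      refine tendsto_integral_of_dominated_convergence (fun p => |f p|)
        (fun N => (hFm N).aestronglyMeasurable) ((hcross t ht i j).abs) ?_ ?_
      · exact fun N => Filter.Eventually.of_forall fun p => by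
          simpa [Real.norm_eq_abs] using hFabs N p
      · exact Filter.Eventually.of_forall fun p => hFtend p
    have hT2 : Tendsto (fun N : ℕ => ∫ p, F N (p.2, p.1) ∂(μ ⊗ₘ κ t)) atTop
        (nhds (∫ p : (Fin n → ℝ) × (Fin n → ℝ), p.2 i * p.1 j ∂(μ ⊗ₘ κ t))) := by
      refine tendsto_integral_of_dominated_convergence (fun p => |p.2 i * p.1 j|)
        (fun N => (hGswapm N).aestronglyMeasurable) hswapint.abs ?_ ?_
      · exact fun N => Filter.Eventually.of_forall fun p => by
          simpa [Real.norm_eq_abs, hf_def] using hFabs N (p.2, p.1)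
      · exact Filter.Eventually.of_forall fun p => hFtend (p.2, p.1)
    have hlim : ∫ p, f p ∂(μ ⊗ₘ κ t)
        = ∫ p : (Fin n → ℝ) × (Fin n → ℝ), p.2 i * p.1 j ∂(μ ⊗ₘ κ t) :=
      tendsto_nhds_unique (hT1.congr fun N => (hNeq N)) hT2
    calc ∫ p : (Fin n → ℝ) × (Fin n → ℝ), p.1 i * p.2 j ∂(μ ⊗ₘ κ t)
        = ∫ p : (Fin n → ℝ) × (Fin n → ℝ), p.2 i * p.1 j ∂(μ ⊗ₘ κ t) := hlim
      _ = ∫ p : (Fin n → ℝ) × (Fin n → ℝ), p.1 j * p.2 i ∂(μ ⊗ₘ κ t) := by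
          simp_rw [mul_comm]
  -- Step 2: compute the cross-correlation integral via the conditional mean
  have hcompute : ∀ t, 0 ≤ t → ∀ i j,
      ∫ p : (Fin n → ℝ) × (Fin n → ℝ), p.1 i * p.2 j ∂(μ ⊗ₘ κ t)
        = ∑ k, NormedSpace.exp (-(t • A)) j k * G i k := by
    intro t ht i j
    haveI := hκ t ht
    rw [MeasureTheory.Measure.integral_compProd (hcross t ht i j)]
    have step1 : ∫ x, (∫ y, x i * y j ∂(κ t x)) ∂μ
        = ∫ x, (∑ k, NormedSpace.exp (-(t • A)) j k * (x i * x k)) ∂μ := by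
      refine integral_congr_ae ?_
      filter_upwards [hmean t ht] with x hx
      rw [MeasureTheory.integral_const_mul, hx.2 j, Matrix.mulVec, dotProduct, Finset.mul_sum]
      exact Finset.sum_congr rfl fun k _ => by ring
    rw [step1, integral_finset_sum]
    · refine Finset.sum_congr rfl fun k _ => ?_
      rw [MeasureTheory.integral_const_mul, hG]
    · exact fun k _ => (hGint i k).const_mul _
  -- Step 3: symmetry of exp(-tA) * G for t ≥ 0
  have hsymm : ∀ t : ℝ, 0 ≤ t → (NormedSpace.exp (-(t • A)) * G).IsSymm := by
    intro t ht
    ext i j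
    rw [Matrix.transpose_apply]
    have h1 := hcompute t ht j i
    have h2 := hcompute t ht i j
    have h3 := hcross_symm t ht j i
    have hGsym : ∀ a b, G a b = G b a := fun a b => by
      rw [hG, hG]; simp_rw [mul_comm]
    simp only [Matrix.mul_apply]
    calc ∑ k, NormedSpace.exp (-(t • A)) j k * G k i
        = ∑ k, NormedSpace.exp (-(t • A)) j k * G i k :=
          Finset.sum_congr rfl fun k _ => by rw [hGsym i k]
      _ = ∫ p : (Fin n → ℝ) × (Fin n → ℝ), p.1 i * p.2 j ∂(μ ⊗ₘ κ t) := h2.symm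
      _ = ∫ p : (Fin n → ℝ) × (Fin n → ℝ), p.1 j * p.2 i ∂(μ ⊗ₘ κ t) :=
          (hcross_symm t ht i j)
      _ = ∑ k, NormedSpace.exp (-(t • A)) i k * G j k := h1
      _ = ∑ k, NormedSpace.exp (-(t • A)) i k * G k j :=
          Finset.sum_congr rfl fun k _ => by rw [hGsym j k]
  refine ⟨?_, ?_, ?_⟩
  · intro N _
    have h := hsymm (N : ℝ) (Nat.cast_nonneg N)
    rwa [Nat.cast_smul_eq_nsmul] at h
  · exact onsager_deriv_step n A G hGs hsymm
  · have hAG := onsager_deriv_step n A G hGs hsymm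
    rw [Matrix.IsSymm, Matrix.transpose_mul, hGs, ← hAG]
end

section
/- Let A and G be real n×n matrices such that: (i) xᵀAx > 0 for every nonzero x ∈ ℝⁿ; (ii) G is symmetric and positive definite; (iii) the product AG is symmetric. Then AG is symmetric positive definite, i.e. xᵀ(AG)x > 0 for every nonzero x ∈ ℝⁿ. -/
open Matrix

private lemma posDef_unitary_conj {m : ℕ} (U D : Matrix (Fin m) (Fin m) ℝ)
    (hU : U ∈ Matrix.unitaryGroup (Fin m) ℝ) (hD : D.PosDef) :
    (U * D * star U).PosDef := by
  refine Matrix.PosDef.of_dotProduct_mulVec_pos ?_ ?_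
  · have hDh := hD.1
    simp only [Matrix.IsHermitian, conjTranspose_mul, conjTranspose_conjTranspose,
      star_eq_conjTranspose, hDh.eq, mul_assoc]
  · intro x hx
    have hUx : (star U) *ᵥ x ≠ 0 := by
      intro h
      apply hx
      have := congrArg (fun v => U *ᵥ v) h
      simpa [mulVec_mulVec, (Matrix.mem_unitaryGroup_iff.mp hU)] using this
    have hpos := hD.dotProduct_mulVec_pos hUx
    have key : star x ⬝ᵥ (U * D * star U) *ᵥ x
        = star ((star U) *ᵥ x) ⬝ᵥ D *ᵥ ((star U) *ᵥ x) := by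
      rw [← mulVec_mulVec, ← mulVec_mulVec, dotProduct_mulVec]
      congr 1
      simp [star_eq_conjTranspose, conjTranspose_eq_transpose_of_trivial, mulVec_transpose]
    rw [key]
    exact hpos

/-- **Onsager reciprocity, definiteness part.** If `xᵀAx > 0` for all nonzero `x`,
`G` is symmetric positive definite, and `A * G` is symmetric, then the mobility
`M = A * G` is symmetric positive definite. -/
theorem onsager_mobility_posDef
    (n : ℕ) (A G : Matrix (Fin n) (Fin n) ℝ)
    (hA : ∀ x : Fin n → ℝ, x ≠ 0 → 0 < x ⬝ᵥ A.mulVec x)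
    (hG : G.PosDef)
    (hAG : (A * G).IsSymm) :
    (A * G).PosDef := by
  have hM : (A * G).IsHermitian := by
    rw [Matrix.IsHermitian, conjTranspose_eq_transpose_of_trivial]
    exact hAG
  have heig : ∀ i, 0 < hM.eigenvalues i := by
    intro i
    set v : Fin n → ℝ := ⇑(hM.eigenvectorBasis i) with hv
    have hv0 : v ≠ 0 := by
      have := hM.eigenvectorBasis.orthonormal.ne_zero i
      intro h
      apply this
      ext j
      exact congrFun h j
    have hvec : A *ᵥ (G *ᵥ v) = hM.eigenvalues i • v := by
      rw [mulVec_mulVec]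
      exact hM.mulVec_eigenvectorBasis i
    have h2 : 0 < v ⬝ᵥ G *ᵥ v := by
      have := hG.dotProduct_mulVec_pos hv0
      simpa using this
    have hGv : G *ᵥ v ≠ 0 := by
      intro h
      rw [h] at h2
      simp at h2
    have hpos := hA (G *ᵥ v) hGv
    have h1 : (G *ᵥ v) ⬝ᵥ A *ᵥ (G *ᵥ v) = hM.eigenvalues i * (v ⬝ᵥ G *ᵥ v) := by
      rw [hvec, dotProduct_smul, smul_eq_mul, dotProduct_comm]
    nlinarith [h1, h2, hpos]
  have hD : (Matrix.diagonal (RCLike.ofReal ∘ hM.eigenvalues) :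
      Matrix (Fin n) (Fin n) ℝ).PosDef := by
    rw [posDef_diagonal_iff]
    intro i
    simpa using heig i
  have hres := posDef_unitary_conj _ _ (hM.eigenvectorUnitary).2 hD
  rw [hM.spectral_theorem]
  exact hres
end

section
/- Let L : ℝⁿ × ℝⁿ → ℝ be continuous and let S : ℝⁿ → ℝ be differentiable. Assume that for every T > 0 and every continuously differentiable curve z : [0,T] → ℝⁿ, S(z(0)) - ∫₀ᵀ L(z(t), ż(t)) dt = S(z(T)) - ∫₀ᵀ L(z(t), -ż(t)) dt. Then for every z, s ∈ ℝⁿ, L(z, s) - L(z, -s) = -⟨∇S(z), s⟩. -/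
open scoped RealInnerProductSpace

/-- **Time-reversal symmetry of the Lagrangian from reversibility.** If the
finite-time identity `S(z(0)) - ∫₀ᵀ L(z,ż) = S(z(T)) - ∫₀ᵀ L(z,-ż)` holds for every
`T > 0` and every `C¹` curve `z`, then `L(z,s) - L(z,-s) = -⟨∇S(z), s⟩` pointwise. -/
theorem lagrangian_time_reversal_symmetry
    (n : ℕ) (L : EuclideanSpace ℝ (Fin n) → EuclideanSpace ℝ (Fin n) → ℝ)
    (hL : Continuous fun p : EuclideanSpace ℝ (Fin n) × EuclideanSpace ℝ (Fin n) =>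
      L p.1 p.2)
    (S : EuclideanSpace ℝ (Fin n) → ℝ) (hS : Differentiable ℝ S)
    (hrev : ∀ T : ℝ, 0 < T → ∀ z : ℝ → EuclideanSpace ℝ (Fin n), ContDiff ℝ 1 z →
      S (z 0) - ∫ t in (0:ℝ)..T, L (z t) (deriv z t) =
        S (z T) - ∫ t in (0:ℝ)..T, L (z t) (-(deriv z t))) :
    ∀ z s : EuclideanSpace ℝ (Fin n), L z s - L z (-s) = -⟪gradient S z, s⟫ := by
  intro z s
  set c : ℝ → EuclideanSpace ℝ (Fin n) := fun t => z + t • s with hc_def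
  have hcderiv : ∀ t : ℝ, HasDerivAt c s t := by
    intro t
    simpa [hc_def] using (hasDerivAt_id t).smul_const s |>.const_add z
  have hderiv_eq : ∀ t : ℝ, deriv c t = s := fun t => (hcderiv t).deriv
  have hc : ContDiff ℝ 1 c :=
    contDiff_const.add (contDiff_id.smul contDiff_const)
  have hcc : Continuous c := hc.continuous
  -- continuous integrand
  set g : ℝ → ℝ := fun t => L (c t) (-s) - L (c t) s with hg_def
  have hg_cont : Continuous g := by
    apply Continuous.sub
    · exact hL.comp (hcc.prodMk continuous_const)
    · exact hL.comp (hcc.prodMk continuous_const)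
  -- the key identity for T ≥ 0
  have key : ∀ T ∈ Set.Ici (0:ℝ), S (c T) - S (c 0) = ∫ t in (0:ℝ)..T, g t := by
    intro T hT
    rcases eq_or_lt_of_le (Set.mem_Ici.mp hT) with h | h
    · simp [← h]
    · have := hrev T h c hc
      have h1 : (∫ t in (0:ℝ)..T, L (c t) (deriv c t)) =
          ∫ t in (0:ℝ)..T, L (c t) s := by
        congr 1; ext t; rw [hderiv_eq]
      have h2 : (∫ t in (0:ℝ)..T, L (c t) (-(deriv c t))) =
          ∫ t in (0:ℝ)..T, L (c t) (-s) := by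
        congr 1; ext t; rw [hderiv_eq]
      rw [h1, h2] at this
      have hi1 : IntervalIntegrable (fun t => L (c t) (-s)) MeasureTheory.volume 0 T :=
        ((hL.comp (hcc.prodMk continuous_const)).intervalIntegrable 0 T)
      have hi2 : IntervalIntegrable (fun t => L (c t) s) MeasureTheory.volume 0 T :=
        ((hL.comp (hcc.prodMk continuous_const)).intervalIntegrable 0 T)
      rw [hg_def]
      rw [intervalIntegral.integral_sub hi1 hi2]
      linarith
  -- G has derivative g 0 at 0
  have hG : HasDerivAt (fun T => ∫ t in (0:ℝ)..T, g t) (g 0) 0 := by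
    exact intervalIntegral.integral_hasDerivAt_right
      (hg_cont.intervalIntegrable 0 0)
      (hg_cont.stronglyMeasurableAtFilter _ _)
      hg_cont.continuousAt
  -- f has derivative ⟪∇S z, s⟫ at 0
  have hfd : HasFDerivAt S (fderiv ℝ S z) z := (hS z).hasFDerivAt
  have hc0 : c 0 = z := by simp [hc_def]
  have hf : HasDerivAt (fun T => S (c T) - S (c 0)) (fderiv ℝ S z s) 0 := by
    have : HasDerivAt (fun T => S (c T)) (fderiv ℝ S z s) 0 := by
      have hfd' : HasFDerivAt S (fderiv ℝ S z) (c 0) := by rw [hc0]; exact hfd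
      exact hfd'.comp_hasDerivAt 0 (hcderiv 0)
    simpa using this.sub_const (S (c 0))
  -- uniqueness of derivative within Ici 0
  have hGW : HasDerivWithinAt (fun T => S (c T) - S (c 0)) (g 0) (Set.Ici 0) 0 := by
    refine (hG.hasDerivWithinAt.congr key ?_)
    simp
  have hfW : HasDerivWithinAt (fun T => S (c T) - S (c 0)) (fderiv ℝ S z s) (Set.Ici 0) 0 :=
    hf.hasDerivWithinAt
  have huniq : fderiv ℝ S z s = g 0 := by
    have hu : UniqueDiffWithinAt ℝ (Set.Ici (0:ℝ)) 0 := uniqueDiffOn_Ici 0 0 Set.self_mem_Ici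
    rw [← hfW.derivWithin hu, ← hGW.derivWithin hu]
  have hgrad : ⟪gradient S z, s⟫ = fderiv ℝ S z s := by
    have := (hS z).hasGradientAt
    rw [hasGradientAt_iff_hasFDerivAt] at this
    rw [this.fderiv]
    simp
  rw [hgrad, huniq, hg_def]
  simp [hc0]
end

section
/- Let L : ℝⁿ → ℝ be convex with L(s) ≥ 0 for all s and inf_{s ∈ ℝⁿ} L(s) = 0, and let ξ* ∈ ℝⁿ satisfy L(s) - L(-s) = -2⟨ξ*, s⟩ for all s ∈ ℝⁿ. Define Ψ : ℝⁿ → ℝ by Ψ(s) := L(s) + ⟨ξ*, s⟩ - L(0). Then: (i) Ψ is convex; (ii) Ψ is symmetric, i.e. Ψ(s) = Ψ(-s) for all s; (iii) Ψ(0) = 0; (iv) Ψ(s) ≥ 0 for all s, hence min_{s} Ψ(s) = 0. -/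
open Matrix

/-- **Construction of the symmetric dissipation potential.** If `L` is convex,
nonnegative, with `inf L = 0`, and satisfies the time-reversal relation
`L(s) - L(-s) = -2⟨ξ*, s⟩`, then `Ψ(s) := L(s) + ⟨ξ*, s⟩ - L(0)` is convex,
symmetric, vanishes at `0`, and is nonnegative, hence `min Ψ = 0`. -/
theorem symmetric_dissipation_potential_construction
    (n : ℕ) (L : (Fin n → ℝ) → ℝ) (hconv : ConvexOn ℝ Set.univ L)
    (hnonneg : ∀ s, 0 ≤ L s) (hinf : sInf (Set.range L) = 0)
    (ξstar : Fin n → ℝ) (hsym : ∀ s, L s - L (-s) = -(2 * (ξstar ⬝ᵥ s)))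
    (Ψ : (Fin n → ℝ) → ℝ) (hΨ : ∀ s, Ψ s = L s + ξstar ⬝ᵥ s - L 0) :
    ConvexOn ℝ Set.univ Ψ ∧ (∀ s, Ψ s = Ψ (-s)) ∧ Ψ 0 = 0 ∧
      (∀ s, 0 ≤ Ψ s) ∧ IsLeast (Set.range Ψ) 0 := by
  have hdot_neg : ∀ s : Fin n → ℝ, ξstar ⬝ᵥ (-s) = -(ξstar ⬝ᵥ s) := fun s => by
    simp [dotProduct_neg]
  have hzero : Ψ 0 = 0 := by simp [hΨ 0]
  have hnn : ∀ s, 0 ≤ Ψ s := by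
    intro s
    have hmid := hconv.2 (Set.mem_univ s) (Set.mem_univ (-s))
      (by norm_num : (0:ℝ) ≤ 1/2) (by norm_num : (0:ℝ) ≤ 1/2) (by norm_num)
    have h0 : (1/2 : ℝ) • s + (1/2 : ℝ) • (-s) = 0 := by
      simp [smul_neg]
    rw [h0] at hmid
    have := hsym s
    have := hΨ s
    simp only [smul_eq_mul] at hmid
    linarith
  refine ⟨?_, ?_, hzero, hnn, ⟨⟨0, hzero⟩, ?_⟩⟩
  · have hlin : ConvexOn ℝ Set.univ (fun s : Fin n → ℝ => ξstar ⬝ᵥ s) := by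
      refine ⟨convex_univ, fun x _ y _ a b _ _ _ => ?_⟩
      simp [dotProduct_add, dotProduct_smul, smul_eq_mul, mul_comm]
    have := (hconv.add hlin).sub (concaveOn_const (L 0) convex_univ)
    rw [show Ψ = ((L + fun s => ξstar ⬝ᵥ s) - fun _ => L 0) from ?_]
    · exact this
    funext s
    simpa using hΨ s
  · intro s
    have h1 := hΨ s
    have h2 := hΨ (-s)
    rw [hdot_neg s] at h2
    have := hsym s
    linarith
  · rintro y ⟨s, rfl⟩
    exact hnn s
end

section
/- Let I, J ∈ ℕ. Let c̄ ∈ ℝᴵ with c̄_i > 0 for all i, let k_j > 0 for j = 1,…,J, and let α_j, β_j ∈ ℕᴵ for j = 1,…,J. For c ∈ ℝᴵ with c_i > 0 for all i, set u_i := c_i/c̄_i, define S(c) := -∑_{i=1}^I c̄_i η(c_i/c̄_i) with η(s) = s·log s - s + 1, and define Ψ*(c, ξ) := ∑_{j=1}^J 2 k_j ( ∏_{i=1}^I u_i^{(α_{ij}+β_{ij})/2} ) ( cosh( ∑_{i=1}^I (α_{ij} - β_{ij}) ξ_i ) - 1 ) for ξ ∈ ℝᴵ. Then for every c with all c_i >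 0, the gradient of ξ ↦ Ψ*(c, ξ) evaluated at ξ = ½∇S(c) equals ∑_{j=1}^J k_j ( ∏_i u_i^{α_{ij}} - ∏_i u_i^{β_{ij}} ) (β_j - α_j) ∈ ℝᴵ, i.e. the right-hand side of the reaction-rate equation ċ = ∑_j k_j (u^{α_j} - u^{β_j})(β_j - α_j). -/
open scoped BigOperators

lemma grad_eq_of_hasFDerivAt {n : ℕ} (f : EuclideanSpace ℝ (Fin n) → ℝ)
    (x g : EuclideanSpace ℝ (Fin n)) (L : EuclideanSpace ℝ (Fin n) →L[ℝ] ℝ)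
    (hL : HasFDerivAt f L x) (h : ∀ v : EuclideanSpace ℝ (Fin n), L v = ∑ i, g i * v i) :
    gradient f x = g := by
  have hg : HasGradientAt f g x := by
    rw [hasGradientAt_iff_hasFDerivAt]
    have hE : (InnerProductSpace.toDual ℝ (EuclideanSpace ℝ (Fin n))) g = L := by
      ext v
      simp [InnerProductSpace.toDual_apply_apply, PiLp.inner_apply, h v, mul_comm]
    rw [hE]; exact hL
  exact hg.gradient


/-- **The reaction-rate equation as a generalized gradient flow.** For a mass-action
reaction network with detailed-balance equilibrium `c̄`, rate constants `k_j`, and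
stoichiometric vectors `α_j, β_j`, with entropy `S(c) = -∑ᵢ c̄ᵢ η(cᵢ/c̄ᵢ)`,
`η(s) = s log s - s + 1`, and cosh-type dual dissipation potential `Ψ*`, the
gradient of `ξ ↦ Ψ*(c,ξ)` at `ξ = ½∇S(c)` equals the right-hand side
`∑ⱼ kⱼ (u^{αⱼ} - u^{βⱼ})(βⱼ - αⱼ)` of the reaction-rate equation. -/
theorem reaction_rate_equation_is_generalized_gradient_flow
    (I J : ℕ) (cbar : Fin I → ℝ) (hcbar : ∀ i, 0 < cbar i)
    (k : Fin J → ℝ) (hk : ∀ j, 0 < k j)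
    (α β : Fin J → Fin I → ℕ)
    (η : ℝ → ℝ) (hη : ∀ s, η s = s * Real.log s - s + 1)
    (S : EuclideanSpace ℝ (Fin I) → ℝ)
    (hS : ∀ c, S c = -∑ i, cbar i * η (c i / cbar i))
    (Ψstar : EuclideanSpace ℝ (Fin I) → EuclideanSpace ℝ (Fin I) → ℝ)
    (hΨstar : ∀ c ξ, Ψstar c ξ =
      ∑ j, 2 * k j * (∏ i, (c i / cbar i) ^ (((α j i : ℝ) + (β j i : ℝ)) / 2)) *
        (Real.cosh (∑ i, ((α j i : ℝ) - (β j i : ℝ)) * ξ i) - 1)) :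
    ∀ c : EuclideanSpace ℝ (Fin I), (∀ i, 0 < c i) →
      ∀ i, gradient (fun ξ => Ψstar c ξ) ((1/2 : ℝ) • gradient S c) i =
        ∑ j, k j * ((∏ i', (c i' / cbar i') ^ (α j i' : ℝ)) -
            ∏ i', (c i' / cbar i') ^ (β j i' : ℝ)) * ((β j i : ℝ) - (α j i : ℝ)) := by
  intro c hc i
  set u : Fin I → ℝ := fun i => c i / cbar i with hu
  have hupos : ∀ i, 0 < u i := fun i => div_pos (hc i) (hcbar i)
  -- gradient of S
  have hSgrad : gradient S c = (WithLp.toLp 2 (fun i' => -Real.log (u i')) : EuclideanSpace ℝ (Fin I)) := by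
    apply grad_eq_of_hasFDerivAt S c _
      (-∑ i', (Real.log (u i')) • EuclideanSpace.proj (𝕜 := ℝ) i')
    · have hterm : ∀ i' : Fin I,
          HasFDerivAt (fun ξ : EuclideanSpace ℝ (Fin I) => cbar i' * η (ξ i' / cbar i'))
            ((Real.log (u i')) • EuclideanSpace.proj (𝕜 := ℝ) i') c := by
        intro i'
        have hb := hcbar i'
        have h1 : HasDerivAt η (Real.log (u i')) (u i') := by
          have h0 : HasDerivAt (fun s : ℝ => s * Real.log s - s + 1)
              (Real.log (u i') + 1 - 1) (u i') :=
            ((Real.hasDerivAt_mul_log (ne_of_gt (hupos i'))).sub (hasDerivAt_id _)).add_const 1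
          have : η = fun s : ℝ => s * Real.log s - s + 1 := funext hη
          rw [this]
          simpa using h0
        have h2 : HasDerivAt (fun s : ℝ => s / cbar i') (1 / cbar i') (c i') := by
          simpa using (hasDerivAt_id (c i')).div_const (cbar i')
        have h3 := (h1.comp (c i') h2).const_mul (cbar i')
        have h4 : HasDerivAt (fun s : ℝ => cbar i' * η (s / cbar i'))
            (Real.log (u i')) (c i') := by
          have h6 : cbar i' * (Real.log (u i') * (1 / cbar i')) = Real.log (u i') := by
            field_simp
          rw [h6] at h3
          exact h3
        have h5 := h4.comp_hasFDerivAt c (EuclideanSpace.proj (𝕜 := ℝ) i').hasFDerivAt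
        exact h5
      have hsum : HasFDerivAt (fun ξ : EuclideanSpace ℝ (Fin I) =>
          ∑ i', cbar i' * η (ξ i' / cbar i'))
          (∑ i', (Real.log (u i')) • EuclideanSpace.proj (𝕜 := ℝ) i') c :=
        HasFDerivAt.fun_sum (fun i' _ => hterm i')
      have : S = fun ξ => -∑ i', cbar i' * η (ξ i' / cbar i') := funext hS
      rw [this]
      exact hsum.neg
    · intro v
      simp [neg_mul]
  -- the evaluation point
  set ξ₀ : EuclideanSpace ℝ (Fin I) := (1/2 : ℝ) • gradient S c with hξ₀
  have hξ₀i : ∀ i', ξ₀ i' = -(Real.log (u i')) / 2 := by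
    intro i'
    rw [hξ₀, hSgrad]
    simp [PiLp.smul_apply]
    ring
  -- data for Ψ*
  set w : Fin J → Fin I → ℝ := fun j i' => (α j i' : ℝ) - (β j i' : ℝ) with hw
  set A : Fin J → ℝ := fun j => 2 * k j * ∏ i', u i' ^ (((α j i' : ℝ) + (β j i' : ℝ)) / 2)
    with hA
  set θ : Fin J → ℝ := fun j => ∑ i', w j i' * ξ₀ i' with hθ
  set Lw : Fin J → (EuclideanSpace ℝ (Fin I) →L[ℝ] ℝ) :=
    fun j => ∑ i', (w j i') • EuclideanSpace.proj (𝕜 := ℝ) i' with hLw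
  have hLwv : ∀ j v, Lw j v = ∑ i', w j i' * v i' := by
    intro j v; simp [hLw]
  have hgrad : gradient (fun ξ => Ψstar c ξ)  ξ₀ =
      (WithLp.toLp 2 (fun i' => ∑ j, A j * Real.sinh (θ j) * w j i') : EuclideanSpace ℝ (Fin I)) := by
    apply grad_eq_of_hasFDerivAt _ _ _ (∑ j, (A j * Real.sinh (θ j)) • Lw j)
    · have hterm : ∀ j : Fin J, HasFDerivAt (fun ξ : EuclideanSpace ℝ (Fin I) =>
          A j * (Real.cosh (∑ i', w j i' * ξ i') - 1))
          ((A j * Real.sinh (θ j)) • Lw j) ξ₀ := by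
        intro j
        have hlin : HasFDerivAt (fun ξ : EuclideanSpace ℝ (Fin I) => ∑ i', w j i' * ξ i')
            (Lw j) ξ₀ := by
          have := (Lw j).hasFDerivAt (x := ξ₀)
          convert this using 2 with ξ
          rw [hLwv]
        have hcoshd : HasDerivAt Real.cosh (Real.sinh (θ j))
            ((fun ξ : EuclideanSpace ℝ (Fin I) => ∑ i', w j i' * ξ i') ξ₀) :=
          Real.hasDerivAt_cosh _
        have hcosh := hcoshd.comp_hasFDerivAt ξ₀ hlin
        have := ((hcosh.sub_const 1).const_mul (A j))
        rw [smul_smul] at this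
        exact this
      have : (fun ξ => Ψstar c ξ) = fun ξ : EuclideanSpace ℝ (Fin I) =>
          ∑ j, A j * (Real.cosh (∑ i', w j i' * ξ i') - 1) := by
        funext ξ
        rw [hΨstar]
      rw [this]
      exact HasFDerivAt.fun_sum (fun j _ => hterm j)
    · intro v
      simp only [ContinuousLinearMap.sum_apply, ContinuousLinearMap.smul_apply, smul_eq_mul,
        hLwv, Finset.mul_sum]
      rw [Finset.sum_comm]
      refine Finset.sum_congr rfl fun i' _ => ?_
      rw [Finset.sum_mul]
      exact Finset.sum_congr rfl fun j _ => by ring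
  have hexp : ∀ (t : Fin I → ℝ),
      Real.exp (∑ i', t i' * Real.log (u i')) = ∏ i', u i' ^ t i' := by
    intro t
    rw [Real.exp_sum]
    exact Finset.prod_congr rfl fun i' _ => by
      rw [Real.rpow_def_of_pos (hupos i'), mul_comm]
  have hcomb : ∀ (x y : Fin I → ℝ),
      (∏ i', u i' ^ x i') * (∏ i', u i' ^ y i') = ∏ i', u i' ^ (x i' + y i') := by
    intro x y
    rw [← Finset.prod_mul_distrib]
    exact Finset.prod_congr rfl fun i' _ => (Real.rpow_add (hupos i') _ _).symm
  have hsinh : ∀ j, A j * Real.sinh (θ j) =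
      k j * ((∏ i', u i' ^ (β j i' : ℝ)) - ∏ i', u i' ^ (α j i' : ℝ)) := by
    intro j
    have hθval : θ j = ∑ i', (-(w j i') / 2) * Real.log (u i') :=
      Finset.sum_congr rfl fun i' _ => by rw [hξ₀i]; ring
    have hexpθ : Real.exp (θ j) = ∏ i', u i' ^ (-(w j i') / 2) := by
      rw [hθval, hexp (fun i' => -(w j i') / 2)]
    have hnθ : -θ j = ∑ i', (w j i' / 2) * Real.log (u i') := by
      rw [hθval, ← Finset.sum_neg_distrib]
      exact Finset.sum_congr rfl fun i' _ => by ring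
    have hexpnθ : Real.exp (-θ j) = ∏ i', u i' ^ (w j i' / 2) := by
      rw [hnθ, hexp (fun i' => w j i' / 2)]
    have hPβ : (∏ i', u i' ^ (((α j i' : ℝ) + (β j i' : ℝ)) / 2)) *
        ∏ i', u i' ^ (-(w j i') / 2) = ∏ i', u i' ^ (β j i' : ℝ) := by
      rw [hcomb]
      exact Finset.prod_congr rfl fun i' _ => by
        congr 1
        simp only [hw]
        ring
    have hPα : (∏ i', u i' ^ (((α j i' : ℝ) + (β j i' : ℝ)) / 2)) *
        ∏ i', u i' ^ (w j i' / 2) = ∏ i', u i' ^ (α j i' : ℝ) := by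
      rw [hcomb]
      exact Finset.prod_congr rfl fun i' _ => by
        congr 1
        simp only [hw]
        ring
    simp only [hA]
    rw [Real.sinh_eq, hexpθ, hexpnθ]
    linear_combination k j * hPβ - k j * hPα
  rw [hgrad, PiLp.toLp_apply]
  refine Finset.sum_congr rfl fun j _ => ?_
  rw [hsinh j]
  simp only [hw]
  ring
end
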